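/- Let P be a class of finite metric spaces that is closed under isometry (if M ∈ P and N is isometric to M then N ∈ P) and hereditary (if M ∈ P and N is a subspace of M then N ∈ P). Suppose there exists a finite metric space M₀, all of whose distances between distinct points lie in {1,2}, with M₀ ∉ P. Then there exists a constant C > 0, depending only on the cardinality of M₀, such that for arbitrarily large n there exists an n-point metric space M_n with the property that every subspace S ⊆ M_n with |S| ≥ C·log n is not in P. -/

import Mathlib

set_option maxHeartbeats 1600000

/-- `d` is a metric (distance function) on `α`. -/
def IsMetricDist {α : Type*} (d : α → α → ℝ) : Prop :=
  (∀ x y, d x y = 0 ↔ x = y) ∧ (∀ x y, d x y = d y x) ∧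
    (∀ x y z, d x z ≤ d x y + d y z)

open Finset

attribute [local instance] Classical.propDecidable

lemma indep_count {ε : Type*} [Fintype ε] [DecidableEq ε]
    (p q : (ε → Bool) → Prop) (A B : Finset ε) (hAB : Disjoint A B)
    (hp : ∀ c c', (∀ e ∈ A, c e = c' e) → p c → p c')
    (hq : ∀ c c', (∀ e ∈ B, c e = c' e) → q c → q c') :
    (univ.filter fun c => p c ∧ q c).card * 2 ^ (Fintype.card ε)
      = (univ.filter p).card * (univ.filter q).card := by
  classical
  set merge : (ε → Bool) → (ε → Bool) → (ε → Bool) :=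
    fun c₁ c₂ e => if e ∈ A then c₁ e else c₂ e with hmerge
  have hmm : ∀ c₁ c₂ c₃ c₄ : ε → Bool,
      merge (merge c₁ c₂) (merge c₃ c₄) = merge c₁ c₄ := by
    intro c₁ c₂ c₃ c₄; funext e; by_cases h : e ∈ A <;> simp [hmerge, h]
  have hid : ∀ c : ε → Bool, merge c c = c := by
    intro c; funext e; by_cases h : e ∈ A <;> simp [hmerge, h]
  have hAgr : ∀ c₁ c₂, ∀ e ∈ A, c₁ e = merge c₁ c₂ e := by
    intro c₁ c₂ e he; simp [hmerge, he]
  have hBgr : ∀ c₁ c₂, ∀ e ∈ B, c₂ e = merge c₁ c₂ e := by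
    intro c₁ c₂ e he
    have : e ∉ A := fun hA => (Finset.disjoint_left.mp hAB) hA he
    simp [hmerge, this]
  have key : ((univ.filter p) ×ˢ (univ.filter q)).card
      = ((univ.filter fun c => p c ∧ q c) ×ˢ (univ : Finset (ε → Bool))).card := by
    apply Finset.card_bij' (fun x _ => (merge x.1 x.2, merge x.2 x.1))
      (fun x _ => (merge x.1 x.2, merge x.2 x.1))
    · rintro ⟨c₁, c₂⟩ hx
      simp only [Finset.mem_product, Finset.mem_filter, Finset.mem_univ, true_and] at hx ⊢
      exact ⟨⟨hp _ _ (hAgr c₁ c₂) hx.1, hq _ _ (hBgr c₁ c₂) hx.2⟩, trivial⟩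
    · rintro ⟨d₁, d₂⟩ hx
      simp only [Finset.mem_product, Finset.mem_filter, Finset.mem_univ, true_and, and_true] at hx ⊢
      constructor
      · exact hp _ _ (hAgr d₁ d₂) hx.1
      · exact hq _ _ (hBgr d₂ d₁) hx.2
        
    · rintro ⟨c₁, c₂⟩ _; simp only [Prod.mk.injEq]; exact ⟨(hmm _ _ _ _).trans (hid _), (hmm _ _ _ _).trans (hid _)⟩
    · rintro ⟨c₁, c₂⟩ _; simp only [Prod.mk.injEq]; exact ⟨(hmm _ _ _ _).trans (hid _), (hmm _ _ _ _).trans (hid _)⟩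
  rw [Finset.card_product, Finset.card_product] at key
  rw [Finset.card_univ, Fintype.card_fun] at key
  simp only [Fintype.card_bool] at key
  omega

lemma filter_ext {α : Type*} (s : Finset α) (p q : α → Prop) {h1 : DecidablePred p}
    {h2 : DecidablePred q} (h : ∀ x, p x ↔ q x) :
    @Finset.filter _ p h1 s = @Finset.filter _ q h2 s := by
  ext x; simp only [Finset.mem_filter]; rw [h x]

lemma indep_count_many {ε ι : Type*} [Fintype ε] [DecidableEq ε] [DecidableEq ι]
    (I : Finset ι) (A : ι → Finset ε) (p : ι → (ε → Bool) → Prop) (j b : ℕ)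
    (hdisj : ∀ i ∈ I, ∀ i' ∈ I, i ≠ i' → Disjoint (A i) (A i'))
    (hdep : ∀ i ∈ I, ∀ c c', (∀ e ∈ A i, c e = c' e) → p i c → p i c')
    (hbound : ∀ i ∈ I, (univ.filter (p i)).card * 2 ^ j ≤ b * 2 ^ Fintype.card ε) :
    (univ.filter fun c => ∀ i ∈ I, p i c).card * (2 ^ j) ^ I.card
      ≤ b ^ I.card * 2 ^ Fintype.card ε := by
  classical
  induction I using Finset.induction_on with
  | empty =>
      simp only [Finset.card_empty, pow_zero, mul_one, one_mul]
      calc (univ.filter fun c => ∀ i ∈ (∅ : Finset ι), p i c).card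
          ≤ (univ : Finset (ε → Bool)).card := Finset.card_filter_le _ _
        _ = 2 ^ Fintype.card ε := by
            rw [Finset.card_univ, Fintype.card_fun, Fintype.card_bool]
  | @insert a s ha ih =>
      have hins : (univ.filter fun c => ∀ i ∈ insert a s, p i c)
          = univ.filter fun c => p a c ∧ ∀ i ∈ s, p i c := by
        apply Finset.filter_congr; intro c _
        simp [Finset.forall_mem_insert]
      have hAB : Disjoint (A a) (s.biUnion A) := by
        rw [Finset.disjoint_biUnion_right]
        intro i hi
        exact hdisj a (Finset.mem_insert_self a s) i (Finset.mem_insert_of_mem hi)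
          (fun h => ha (h ▸ hi))
      have key := indep_count (p a) (fun c => ∀ i ∈ s, p i c) (A a) (s.biUnion A) hAB
        (hdep a (Finset.mem_insert_self a s))
        (by
          intro c c' hagr hc i hi
          exact hdep i (Finset.mem_insert_of_mem hi) c c'
            (fun e he => hagr e (Finset.mem_biUnion.mpr ⟨i, hi, he⟩)) (hc i hi))
      have ihs : (univ.filter fun c => ∀ i ∈ s, p i c).card * (2 ^ j) ^ s.card
          ≤ b ^ s.card * 2 ^ Fintype.card ε := by
        apply ih
        · intro i hi i' hi' h
          exact hdisj i (Finset.mem_insert_of_mem hi) i' (Finset.mem_insert_of_mem hi') h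
        · intro i hi; exact hdep i (Finset.mem_insert_of_mem hi)
        · intro i hi; exact hbound i (Finset.mem_insert_of_mem hi)
      have hb := hbound a (Finset.mem_insert_self a s)
      rw [hins, Finset.card_insert_of_notMem ha]
      set X := (univ.filter fun c => p a c ∧ ∀ i ∈ s, p i c).card
      set Y := (univ.filter (p a)).card
      set Z := (univ.filter fun c => ∀ i ∈ s, p i c).card
      set E := 2 ^ Fintype.card ε with hE
      have hEpos : 0 < E := Nat.pow_pos (by norm_num)
      have hXE : X * E = Y * Z := by
        convert key using 3 <;>
        exact filter_ext _ _ _ (fun x => Iff.rfl)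
      -- X * E = Y * Z ; Y * 2^j ≤ b*E ; Z * (2^j)^s.card ≤ b^s.card * E
      -- goal : X * (2^j)^(s.card+1) ≤ b^(s.card+1) * E
      have step : X * (2 ^ j) ^ (s.card + 1) * E ≤ b ^ (s.card + 1) * E * E := by
        calc X * (2 ^ j) ^ (s.card + 1) * E
            = (X * E) * ((2 ^ j) * (2 ^ j) ^ s.card) := by ring
          _ = (Y * 2 ^ j) * (Z * (2 ^ j) ^ s.card) := by rw [hXE]; ring
          _ ≤ (b * E) * (b ^ s.card * E) := Nat.mul_le_mul hb ihs
          _ = b ^ (s.card + 1) * E * E := by ring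
      exact Nat.le_of_mul_le_mul_right step hEpos

lemma pair_eq {α : Type*} [LinearOrder α] {a b c d : α}
    (h1 : min a b = min c d) (h2 : max a b = max c d) :
    (a = c ∧ b = d) ∨ (a = d ∧ b = c) := by
  rcases le_total a b with h | h <;> rcases le_total c d with h' | h'
  · simp only [min_eq_left h, max_eq_right h, min_eq_left h', max_eq_right h'] at h1 h2
    exact Or.inl ⟨h1, h2⟩
  · simp only [min_eq_left h, max_eq_right h, min_eq_right h', max_eq_left h'] at h1 h2
    exact Or.inr ⟨h1, h2⟩
  · simp only [min_eq_right h, max_eq_left h, min_eq_left h', max_eq_right h'] at h1 h2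
    exact Or.inr ⟨h2, h1⟩
  · simp only [min_eq_right h, max_eq_left h, min_eq_right h', max_eq_left h'] at h1 h2
    exact Or.inl ⟨h2, h1⟩

namespace Stmt7

def edge {n : ℕ} (x y : Fin n) : Fin n × Fin n := (min x y, max x y)

lemma edge_comm {n : ℕ} (x y : Fin n) : edge x y = edge y x := by
  simp [edge, min_comm, max_comm]

lemma edge_eq {n : ℕ} {x y x' y' : Fin n} (h : edge x y = edge x' y') :
    (x = x' ∧ y = y') ∨ (x = y' ∧ y = x') := by
  have h1 : min x y = min x' y' := congrArg Prod.fst h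
  have h2 : max x y = max x' y' := congrArg Prod.snd h
  exact pair_eq h1 h2

def symc {n : ℕ} (c : Fin n × Fin n → Bool) (x y : Fin n) : Bool := c (edge x y)

lemma symc_comm {n : ℕ} (c : Fin n × Fin n → Bool) (x y : Fin n) :
    symc c x y = symc c y x := by simp [symc, edge_comm]

def vrange {n j : ℕ} (v : Fin j → Fin n) : Finset (Fin n) := Finset.image v Finset.univ

lemma mem_vrange {n j : ℕ} {v : Fin j → Fin n} {x : Fin n} :
    x ∈ vrange v ↔ ∃ a, v a = x := by simp [vrange]

/-- `v` is a (labeled, induced) copy of the first `j` points of the pattern `Pi`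
inside `T`. -/
def IsCopy {n : ℕ} (Pi : ℕ → ℕ → Bool) (c : Fin n × Fin n → Bool) (T : Finset (Fin n))
    {j : ℕ} (v : Fin j → Fin n) : Prop :=
  Function.Injective v ∧ (∀ a, v a ∈ T) ∧
    ∀ a b : Fin j, a ≠ b → symc c (v a) (v b) = Pi a.val b.val

/-- The constraint that `u` fails to complete the level-`j` copy `vi` to a
level-`(j+1)` copy. -/
def Fails {n : ℕ} (Pi : ℕ → ℕ → Bool) (j : ℕ) (u : Fin n) (vi : Fin j → Fin n)
    (c : Fin n × Fin n → Bool) : Prop :=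
  ¬ ∀ a : Fin j, symc c u (vi a) = Pi a.val j

/-- Support of the constraint `Fails`. -/
def failSup {n : ℕ} (j : ℕ) (u : Fin n) (vi : Fin j → Fin n) : Finset (Fin n × Fin n) :=
  Finset.image (fun a => edge u (vi a)) Finset.univ

lemma fails_dep {n : ℕ} (Pi : ℕ → ℕ → Bool) (j : ℕ) (u : Fin n) (vi : Fin j → Fin n)
    (c c' : Fin n × Fin n → Bool) (hagr : ∀ e ∈ failSup j u vi, c e = c' e) :
    Fails Pi j u vi c → Fails Pi j u vi c' := by
  intro hc hall
  apply hc
  intro a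
  rw [show symc c u (vi a) = symc c' u (vi a) from
    hagr _ (Finset.mem_image.mpr ⟨a, Finset.mem_univ _, rfl⟩)]
  exact hall a

lemma edge_u_inj {n : ℕ} {j : ℕ} {u : Fin n} {vi : Fin j → Fin n}
    (hinj : Function.Injective vi) (hu : ∀ a, vi a ≠ u) :
    Function.Injective (fun a : Fin j => edge u (vi a)) := by
  intro a b h
  rcases edge_eq h with ⟨_, h2⟩ | ⟨h1, _⟩
  · exact hinj h2
  · exact absurd h1.symm (hu b)

lemma failSup_card {n : ℕ} {j : ℕ} {u : Fin n} {vi : Fin j → Fin n}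
    (hinj : Function.Injective vi) (hu : ∀ a, vi a ≠ u) :
    (failSup j u vi).card = j := by
  rw [failSup, Finset.card_image_of_injective _ (edge_u_inj hinj hu),
    Finset.card_univ, Fintype.card_fin]

/-- Per-constraint counting bound. -/
lemma count_one {n : ℕ} (Pi : ℕ → ℕ → Bool) (j : ℕ) (u : Fin n) (vi : Fin j → Fin n)
    (hinj : Function.Injective vi) (hu : ∀ a, vi a ≠ u)
    (hjE : j ≤ Fintype.card (Fin n × Fin n)) :
    (univ.filter (Fails Pi j u vi)).card * 2 ^ j
      ≤ (2 ^ j - 1) * 2 ^ Fintype.card (Fin n × Fin n) := by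
  classical
  set E := Fintype.card (Fin n × Fin n) with hE
  set A := failSup j u vi with hA
  -- the fixed "pattern" coloring on A
  set patt : Fin n × Fin n → Bool := fun ed =>
    if h : ∃ a : Fin j, edge u (vi a) = ed then Pi (h.choose).val j else false with hpatt
  have hpatt_val : ∀ a : Fin j, patt (edge u (vi a)) = Pi a.val j := by
    intro a
    have hex : ∃ b : Fin j, edge u (vi b) = edge u (vi a) := ⟨a, rfl⟩
    have := hex.choose_spec
    have hba : hex.choose = a := edge_u_inj hinj hu this
    simp only [hpatt, dif_pos hex, hba]
  -- complement count is at least 2^(E - j)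
  set N := (univ.filter (fun c : Fin n × Fin n → Bool =>
      ∀ a : Fin j, symc c u (vi a) = Pi a.val j)).card with hN
  have hNlb : 2 ^ (E - j) ≤ N := by
    have hinj2 : Function.Injective
        (fun f : {ed : Fin n × Fin n // ed ∉ A} → Bool =>
          (fun ed => if h : ed ∈ A then patt ed else f ⟨ed, h⟩ : Fin n × Fin n → Bool)) := by
      intro f f' hff
      funext ⟨ed, hed⟩
      have := congrFun hff ed
      simpa [dif_neg hed] using this
    calc 2 ^ (E - j)
        = Fintype.card ({ed : Fin n × Fin n // ed ∉ A} → Bool) := by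
          rw [Fintype.card_fun, Fintype.card_bool]
          congr 1
          rw [Fintype.card_subtype_compl, Fintype.card_coe,
            failSup_card hinj hu]
      _ = (Finset.univ.image (fun f : {ed : Fin n × Fin n // ed ∉ A} → Bool =>
            (fun ed => if h : ed ∈ A then patt ed else f ⟨ed, h⟩ : Fin n × Fin n → Bool))).card := by
          rw [Finset.card_image_of_injective _ hinj2, Finset.card_univ]
      _ ≤ N := by
          apply Finset.card_le_card
          intro c hc
          rcases Finset.mem_image.mp hc with ⟨f, _, rfl⟩
          apply Finset.mem_filter.mpr
          refine ⟨Finset.mem_univ _, ?_⟩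
          intro a
          have hmem : edge u (vi a) ∈ A :=
            Finset.mem_image.mpr ⟨a, Finset.mem_univ _, rfl⟩
          show (if h : edge u (vi a) ∈ A then patt _ else _) = _
          rw [dif_pos hmem, hpatt_val a]
  have hcards : (univ.filter (Fails Pi j u vi)).card = 2 ^ E - N := by
    have : (univ.filter (Fails Pi j u vi)) =
        univ \ (univ.filter (fun c : Fin n × Fin n → Bool =>
          ∀ a : Fin j, symc c u (vi a) = Pi a.val j)) := by
      ext c
      simp [Fails, Finset.mem_filter, Finset.mem_sdiff]
    rw [this, Finset.card_sdiff_of_subset (Finset.filter_subset _ _), Finset.card_univ,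
      Fintype.card_fun, Fintype.card_bool, hN]
  rw [hcards]
  have key : 2 ^ (E - j) * 2 ^ j = 2 ^ E := by
    rw [← pow_add, Nat.sub_add_cancel hjE]
  calc (2 ^ E - N) * 2 ^ j ≤ (2 ^ E - 2 ^ (E - j)) * 2 ^ j := by
        apply Nat.mul_le_mul_right
        omega
    _ = 2 ^ E * 2 ^ j - 2 ^ E := by rw [Nat.sub_mul, key]
    _ = (2 ^ j - 1) * 2 ^ E := by
        rw [Nat.sub_mul, one_mul, Nat.mul_comm]
  

/-- A family of pairwise disjoint level-`j` copies. -/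
def GoodFam {n : ℕ} (Pi : ℕ → ℕ → Bool) (c : Fin n × Fin n → Bool) (T : Finset (Fin n))
    (j : ℕ) (F : Finset (Fin j → Fin n)) : Prop :=
  (∀ v ∈ F, IsCopy Pi c T v) ∧
    ∀ v ∈ F, ∀ w ∈ F, v ≠ w → Disjoint (vrange v) (vrange w)

def HasFam {n : ℕ} (Pi : ℕ → ℕ → Bool) (c : Fin n × Fin n → Bool) (T : Finset (Fin n))
    (j s : ℕ) : Prop :=
  ∃ F : Finset (Fin j → Fin n), GoodFam Pi c T j F ∧ s ≤ F.card

lemma hasFam_one {n : ℕ} (Pi : ℕ → ℕ → Bool) (c : Fin n × Fin n → Bool)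
    (T : Finset (Fin n)) {s : ℕ} (hs : s ≤ T.card) : HasFam Pi c T 1 s := by
  classical
  obtain ⟨T₁, hT₁, hT₁card⟩ := Finset.exists_subset_card_eq hs
  refine ⟨T₁.image (fun x => (fun _ : Fin 1 => x)), ⟨?_, ?_⟩, ?_⟩
  · intro v hv
    rcases Finset.mem_image.mp hv with ⟨x, hx, rfl⟩
    exact ⟨fun a b _ => Subsingleton.elim a b, fun _ => hT₁ hx,
      fun a b hab => absurd (Subsingleton.elim a b) hab⟩
  · intro v hv w hw hvw
    rcases Finset.mem_image.mp hv with ⟨x, hx, rfl⟩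
    rcases Finset.mem_image.mp hw with ⟨y, hy, rfl⟩
    have hxy : x ≠ y := fun h => hvw (by rw [h])
    rw [Finset.disjoint_left]
    intro z hz hz'
    rw [mem_vrange] at hz hz'
    rcases hz with ⟨a, rfl⟩
    rcases hz' with ⟨b, hb⟩
    exact hxy hb.symm
  · rw [Finset.card_image_of_injective _ (fun x y h => congrFun h 0)]
    omega

lemma chain {n m : ℕ} (Pi : ℕ → ℕ → Bool) (c : Fin n × Fin n → Bool)
    (T : Finset (Fin n)) (hm : 1 ≤ m) (r : ℕ → ℕ) (hr1 : r 1 ≤ T.card) (hrm : 1 ≤ r m)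
    (bad : ¬ ∃ v : Fin m → Fin n, IsCopy Pi c T v) :
    ∃ j, 1 ≤ j ∧ j < m ∧ HasFam Pi c T j (r j) ∧ ¬ HasFam Pi c T (j+1) (r (j+1)) := by
  classical
  suffices H : ∀ t j, 1 ≤ j → j + t = m → HasFam Pi c T j (r j) →
      ∃ j', 1 ≤ j' ∧ j' < m ∧ HasFam Pi c T j' (r j') ∧ ¬ HasFam Pi c T (j'+1) (r (j'+1)) by
    exact H (m - 1) 1 le_rfl (by omega) (hasFam_one Pi c T hr1)
  intro t
  induction t with
  | zero =>
      intro j hj1 hjm hfam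
      exfalso
      have hj : j = m := by omega
      subst hj
      rcases hfam with ⟨F, ⟨hcopy, _⟩, hcard⟩
      have : F.Nonempty := Finset.card_pos.mp (by omega)
      rcases this with ⟨v, hv⟩
      exact bad ⟨v, hcopy v hv⟩
  | succ t ih =>
      intro j hj1 hjm hfam
      by_cases h : HasFam Pi c T (j+1) (r (j+1))
      · exact ih (j+1) (by omega) (by omega) h
      · exact ⟨j, hj1, by omega, hfam, h⟩

lemma extract {n j : ℕ} (Pi : ℕ → ℕ → Bool) (hPi : ∀ a b, Pi a b = Pi b a)
    (c : Fin n × Fin n → Bool) (T : Finset (Fin n)) (hn : 0 < n) (rj rj1 : ℕ)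
    (h1 : HasFam Pi c T j rj) (h2 : ¬ HasFam Pi c T (j+1) rj1) :
    ∃ v : Fin (rj - (j+1)*rj1) → Fin j → Fin n, ∃ g : Fin ((j+1)*rj1) → Fin n,
      (∀ i, Function.Injective (v i)) ∧
      (∀ i i', i ≠ i' → Disjoint (vrange (v i)) (vrange (v i'))) ∧
      ∀ u ∈ T \ ((Finset.image g Finset.univ) ∪
          Finset.univ.biUnion (fun i => vrange (v i))),
        ∀ i, Fails Pi j u (v i) c := by
  classical
  set w : ℕ := (j+1) * rj1 with hw
  -- maximal disjoint family of level-(j+1) copies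
  set 𝒢 : Finset (Finset (Fin (j+1) → Fin n)) :=
    (Finset.univ : Finset (Fin (j+1) → Fin n)).powerset.filter
      (GoodFam Pi c T (j+1)) with h𝒢
  have hEmptyMem : (∅ : Finset (Fin (j+1) → Fin n)) ∈ 𝒢 := by
    refine Finset.mem_filter.mpr ⟨Finset.mem_powerset.mpr (Finset.empty_subset _), ?_, ?_⟩
    · intro v hv; exact absurd hv (Finset.notMem_empty v)
    · intro v hv; exact absurd hv (Finset.notMem_empty v)
  obtain ⟨G, hG𝒢, hGmax⟩ := Finset.exists_max_image 𝒢 Finset.card ⟨∅, hEmptyMem⟩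
  have hGgood : GoodFam Pi c T (j+1) G := (Finset.mem_filter.mp hG𝒢).2
  have hGcard : G.card < rj1 := by
    by_contra h
    exact h2 ⟨G, hGgood, by omega⟩
  set W : Finset (Fin n) := G.biUnion (fun f => vrange f) with hW
  have hWcard : W.card ≤ w := by
    calc W.card ≤ ∑ f ∈ G, (vrange f).card := Finset.card_biUnion_le
      _ ≤ ∑ _f ∈ G, (j+1) := by
          apply Finset.sum_le_sum
          intro f _
          calc (vrange f).card ≤ Finset.univ.card := Finset.card_image_le
            _ = j + 1 := by rw [Finset.card_univ, Fintype.card_fin]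
      _ = G.card * (j+1) := by rw [Finset.sum_const, smul_eq_mul]
      _ ≤ w := by rw [hw]; nlinarith [hGcard]
  -- the covering function g
  set g : Fin w → Fin n := fun i =>
    if h : (i : ℕ) < W.toList.length then W.toList.get ⟨i, h⟩ else ⟨0, hn⟩ with hg
  have hgW : ∀ x ∈ W, x ∈ Finset.image g Finset.univ := by
    intro x hx
    have hxl : x ∈ W.toList := Finset.mem_toList.mpr hx
    rcases List.mem_iff_get.mp hxl with ⟨idx, hidx⟩
    have hlen : W.toList.length = W.card := Finset.length_toList W
    have hiw : (idx : ℕ) < w := by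
      have := idx.isLt
      omega
    refine Finset.mem_image.mpr ⟨⟨idx, hiw⟩, Finset.mem_univ _, ?_⟩
    have hlt : ((⟨idx, hiw⟩ : Fin w) : ℕ) < W.toList.length := by
      simpa using idx.isLt
    rw [hg]
    simp only [hlt, dif_pos]
    have : (⟨((⟨(idx : ℕ), hiw⟩ : Fin w) : ℕ), hlt⟩ : Fin W.toList.length) = idx :=
      Fin.ext (by simp)
    rw [this]
    exact hidx
  -- filter the level-j family
  rcases h1 with ⟨F, ⟨hFcopy, hFdisj⟩, hFcard⟩
  set F' : Finset (Fin j → Fin n) := F.filter (fun f => Disjoint (vrange f) W) with hF'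
  set wfun : (Fin j → Fin n) → Fin n := fun f =>
    if h : ∃ x, x ∈ vrange f ∧ x ∈ W then h.choose else ⟨0, hn⟩ with hwfun
  have hF'card : rj - w ≤ F'.card := by
    have hsplit := Finset.card_filter_add_card_filter_not
      (s := F) (p := fun f => Disjoint (vrange f) W)
    have hbad : (F.filter (fun f => ¬ Disjoint (vrange f) W)).card ≤ W.card := by
      apply Finset.card_le_card_of_injOn wfun
      · intro f hf
        rcases Finset.mem_filter.mp hf with ⟨_, hnd⟩
        rcases Finset.not_disjoint_iff.mp hnd with ⟨x, hx1, hx2⟩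
        have hex : ∃ x, x ∈ vrange f ∧ x ∈ W := ⟨x, hx1, hx2⟩
        rw [hwfun]
        simp only [dif_pos hex]
        exact hex.choose_spec.2
      · intro f hf f' hf' heq
        by_contra hne
        rcases Finset.mem_filter.mp hf with ⟨hfF, hnd⟩
        rcases Finset.mem_filter.mp hf' with ⟨hf'F, hnd'⟩
        have hex : ∃ x, x ∈ vrange f ∧ x ∈ W :=
          Finset.not_disjoint_iff.mp hnd |>.imp (fun x h => ⟨h.1, h.2⟩)
        have hex' : ∃ x, x ∈ vrange f' ∧ x ∈ W :=
          Finset.not_disjoint_iff.mp hnd' |>.imp (fun x h => ⟨h.1, h.2⟩)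
        have h1' : wfun f ∈ vrange f := by
          rw [hwfun]; simp only [dif_pos hex]; exact hex.choose_spec.1
        have h2' : wfun f' ∈ vrange f' := by
          rw [hwfun]; simp only [dif_pos hex']; exact hex'.choose_spec.1
        have hdisj := hFdisj f hfF f' hf'F hne
        rw [heq] at h1'
        exact Finset.disjoint_left.mp hdisj h1' h2'
    have hF'eq : F'.card = (F.filter (fun f => Disjoint (vrange f) W)).card := rfl
    omega
  -- pick exactly rj - w members
  obtain ⟨F'', hF''sub, hF''card⟩ := Finset.exists_subset_card_eq hF'card
  set e := Finset.equivFinOfCardEq hF''card with he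
  set v : Fin (rj - w) → Fin j → Fin n := fun i => (e.symm i : Fin j → Fin n) with hv
  have hvmem : ∀ i, v i ∈ F'' := fun i => (e.symm i).2
  have hvF : ∀ i, v i ∈ F := fun i => Finset.filter_subset _ _ (hF''sub (hvmem i))
  have hvW : ∀ i, Disjoint (vrange (v i)) W :=
    fun i => (Finset.mem_filter.mp (hF''sub (hvmem i))).2
  have hvne : ∀ i i', i ≠ i' → v i ≠ v i' := by
    intro i i' hne hvv
    exact hne (by
      have : e.symm i = e.symm i' := Subtype.ext hvv
      exact e.symm.injective this |>.symm ▸ rfl)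
  refine ⟨v, g, fun i => (hFcopy _ (hvF i)).1, ?_, ?_⟩
  · intro i i' hne
    exact hFdisj _ (hvF i) _ (hvF i') (hvne i i' hne)
  · intro u hu i hall
    rcases Finset.mem_sdiff.mp hu with ⟨huT, hunot⟩
    have hug : u ∉ Finset.image g Finset.univ := fun h => hunot (Finset.mem_union_left _ h)
    have hur : ∀ i', u ∉ vrange (v i') := by
      intro i' h
      exact hunot (Finset.mem_union_right _ (Finset.mem_biUnion.mpr ⟨i', Finset.mem_univ _, h⟩))
    have huW : u ∉ W := fun h => hug (hgW u h)
    have hcopyi := hFcopy _ (hvF i)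
    have hvu : ∀ a, v i a ≠ u := by
      intro a h
      exact hur i (mem_vrange.mpr ⟨a, h⟩)
    -- build the extended copy
    set f' : Fin (j+1) → Fin n := Fin.snoc (v i) u with hf'
    have hf'c : ∀ a : Fin j, f' (Fin.castSucc a) = v i a := fun a => Fin.snoc_castSucc _ _ _
    have hf'l : f' (Fin.last j) = u := Fin.snoc_last _ _
    have hcases : ∀ a : Fin (j+1), (∃ a' : Fin j, a = Fin.castSucc a') ∨ a = Fin.last j :=
      fun a => Fin.eq_castSucc_or_eq_last a
    have hf'copy : IsCopy Pi c T f' := by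
      refine ⟨?_, ?_, ?_⟩
      · intro a b hab
        rcases hcases a with ⟨a', rfl⟩ | rfl <;> rcases hcases b with ⟨b', rfl⟩ | rfl
        · rw [hf'c, hf'c] at hab
          exact congrArg _ (hcopyi.1 hab)
        · rw [hf'c, hf'l] at hab
          exact absurd hab (hvu a')
        · rw [hf'c, hf'l] at hab
          exact absurd hab.symm (hvu b')
        · rfl
      · intro a
        rcases hcases a with ⟨a', rfl⟩ | rfl
        · rw [hf'c]; exact (hcopyi.2.1 a')
        · rw [hf'l]; exact huT
      · intro a b hab
        rcases hcases a with ⟨a', rfl⟩ | rfl <;> rcases hcases b with ⟨b', rfl⟩ | rfl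
        · rw [hf'c, hf'c]
          have : a' ≠ b' := fun h => hab (by rw [h])
          simpa using hcopyi.2.2 a' b' this
        · rw [hf'c, hf'l, symc_comm]
          simpa using hall a'
        · rw [hf'c, hf'l]
          rw [show Pi (Fin.last j).val (Fin.castSucc b').val = Pi (Fin.castSucc b').val (Fin.last j).val from hPi _ _]
          simpa using hall b'
        · exact absurd rfl hab
    have hf'W : Disjoint (vrange f') W := by
      rw [Finset.disjoint_left]
      intro x hx hxW
      rcases mem_vrange.mp hx with ⟨a, rfl⟩
      rcases hcases a with ⟨a', rfl⟩ | rfl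
      · rw [hf'c] at hxW
        exact Finset.disjoint_left.mp (hvW i) (mem_vrange.mpr ⟨a', rfl⟩) hxW
      · rw [hf'l] at hxW
        exact huW hxW
    have hf'G : f' ∉ G := by
      intro hmem
      have : u ∈ W := Finset.mem_biUnion.mpr ⟨f', hmem, mem_vrange.mpr ⟨Fin.last j, hf'l⟩⟩
      exact huW this
    have hG' : insert f' G ∈ 𝒢 := by
      refine Finset.mem_filter.mpr ⟨Finset.mem_powerset.mpr (Finset.subset_univ _), ?_, ?_⟩
      · intro x hx
        rcases Finset.mem_insert.mp hx with rfl | hx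
        · exact hf'copy
        · exact hGgood.1 x hx
      · intro x hx y hy hxy
        rcases Finset.mem_insert.mp hx with rfl | hx <;>
          rcases Finset.mem_insert.mp hy with rfl | hy
        · exact absurd rfl hxy
        · exact Finset.disjoint_of_subset_right
            (fun z hz => Finset.mem_biUnion.mpr ⟨y, hy, hz⟩) hf'W
        · exact (Finset.disjoint_of_subset_right
            (fun z hz => Finset.mem_biUnion.mpr ⟨x, hx, hz⟩) hf'W).symm
        · exact hGgood.2 x hx y hy hxy
    have := hGmax _ hG'
    rw [Finset.card_insert_of_notMem hf'G] at this
    omega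


/-- the sequence of family sizes -/
def rr (m k j : ℕ) : ℕ := k / (4*m)^j

def ssz (m k j : ℕ) : ℕ := rr m k j - (j+1) * rr m k (j+1)
def wsz (m k j : ℕ) : ℕ := (j+1) * rr m k (j+1)

lemma rr_facts {m k j : ℕ} (hm : 1 ≤ m) (hj1 : 1 ≤ j) (hjm : j < m) :
    4 * ((j+1) * rr m k (j+1)) ≤ rr m k j ∧
    4 * (j * rr m k j) ≤ k ∧
    rr m k (m-1) ≤ rr m k j ∧ rr m k j ≤ k := by
  have h4m : 0 < 4*m := by omega
  have hr_succ : rr m k (j+1) = rr m k j / (4*m) := by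
    rw [rr, rr, pow_succ, Nat.div_div_eq_div_mul]
  have h1 : 4 * ((j+1) * rr m k (j+1)) ≤ rr m k j := by
    calc 4 * ((j+1) * rr m k (j+1)) ≤ 4 * (m * rr m k (j+1)) := by
          apply Nat.mul_le_mul_left
          exact Nat.mul_le_mul_right _ (by omega)
      _ = (4*m) * rr m k (j+1) := by ring
      _ = rr m k j / (4*m) * (4*m) := by rw [hr_succ, Nat.mul_comm]
      _ ≤ rr m k j := Nat.div_mul_le_self _ _
  have hrj_le_r1 : rr m k j ≤ rr m k 1 := by
    apply Nat.div_le_div_left _ (by positivity)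
    exact Nat.pow_le_pow_right (by omega) hj1
  have h2 : 4 * (j * rr m k j) ≤ k := by
    calc 4 * (j * rr m k j) ≤ 4 * (m * rr m k 1) := by
          apply Nat.mul_le_mul_left
          exact Nat.mul_le_mul (by omega) hrj_le_r1
      _ = (4*m) * rr m k 1 := by ring
      _ = k / (4*m) * (4*m) := by rw [rr, pow_one, Nat.mul_comm]
      _ ≤ k := Nat.div_mul_le_self _ _
  have h3 : rr m k (m-1) ≤ rr m k j := by
    apply Nat.div_le_div_left _ (by positivity)
    exact Nat.pow_le_pow_right (by omega) (by omega)
  exact ⟨h1, h2, h3, Nat.div_le_self _ _⟩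

lemma index_lb {m k j U : ℕ} (hm : 1 ≤ m) (hj1 : 1 ≤ j) (hjm : j < m)
    (hU : k - (wsz m k j + j * ssz m k j) ≤ U) :
    (k/2) * (rr m k (m-1) / 2) ≤ U * ssz m k j := by
  obtain ⟨h1, h2, h3, h4⟩ := rr_facts (k := k) hm hj1 hjm
  have hs_le : ssz m k j ≤ rr m k j := Nat.sub_le _ _
  have hjs : j * ssz m k j ≤ j * rr m k j := Nat.mul_le_mul_left _ hs_le
  have hcov : wsz m k j + j * ssz m k j ≤ k/2 := by
    rw [wsz]; omega
  have hU2 : k/2 ≤ U := by omega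
  have hsl : rr m k (m-1) / 2 ≤ ssz m k j := by
    rw [ssz, wsz] at *
    omega
  exact Nat.mul_le_mul hU2 hsl

lemma wsum_le {m k j : ℕ} (hm : 1 ≤ m) (hj1 : 1 ≤ j) (hjm : j < m) :
    j * ssz m k j + wsz m k j ≤ k := by
  obtain ⟨h1, h2, h3, h4⟩ := rr_facts (k := k) hm hj1 hjm
  have hs_le : ssz m k j ≤ rr m k j := Nat.sub_le _ _
  have hjs : j * ssz m k j ≤ j * rr m k j := Nat.mul_le_mul_left _ hs_le
  rw [wsz]
  omega


def dataOK {n j s w : ℕ} (D : (Fin s → Fin j → Fin n) × (Fin w → Fin n)) : Prop :=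
  (∀ i, Function.Injective (D.1 i)) ∧
    ∀ i i', i ≠ i' → Disjoint (vrange (D.1 i)) (vrange (D.1 i'))

def Uset {n j s w : ℕ} (T : Finset (Fin n)) (D : (Fin s → Fin j → Fin n) × (Fin w → Fin n)) :
    Finset (Fin n) :=
  T \ ((Finset.image D.2 Finset.univ) ∪ Finset.univ.biUnion (fun i => vrange (D.1 i)))

def Phi {n j s w : ℕ} (Pi : ℕ → ℕ → Bool) (T : Finset (Fin n))
    (D : (Fin s → Fin j → Fin n) × (Fin w → Fin n)) (c : Fin n × Fin n → Bool) : Prop :=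
  ∀ z ∈ (Uset T D) ×ˢ (Finset.univ : Finset (Fin s)), Fails Pi j z.1 (D.1 z.2) c

lemma filter_ext {α : Type*} (s : Finset α) (p q : α → Prop) {h1 : DecidablePred p}
    {h2 : DecidablePred q} (h : ∀ x, p x ↔ q x) :
    @Finset.filter _ p h1 s = @Finset.filter _ q h2 s := by
  ext x; simp only [Finset.mem_filter]; rw [h x]

lemma count_phi {n m k j : ℕ} (Pi : ℕ → ℕ → Bool) (hm : 1 ≤ m) (hj1 : 1 ≤ j) (hjm : j < m)
    (hjE : j ≤ Fintype.card (Fin n × Fin n))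
    (T : Finset (Fin n)) (hT : T.card = k)
    (D : (Fin (ssz m k j) → Fin j → Fin n) × (Fin (wsz m k j) → Fin n)) (hD : dataOK D) :
    ((univ.filter (Phi Pi T D)).card : ℝ)
      ≤ (1 - (1/2:ℝ)^m) ^ ((k/2) * (rr m k (m-1)/2)) * 2 ^ Fintype.card (Fin n × Fin n) := by
  classical
  obtain ⟨hvinj, hvd⟩ := hD
  have hUnr : ∀ u ∈ Uset T D, ∀ (i : Fin (ssz m k j)), ∀ a, D.1 i a ≠ u := by
    intro u hu i a h
    rcases Finset.mem_sdiff.mp hu with ⟨_, hnot⟩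
    exact hnot (Finset.mem_union_right _
      (Finset.mem_biUnion.mpr ⟨i, Finset.mem_univ _, mem_vrange.mpr ⟨a, h⟩⟩))
  have hmain := indep_count_many (I := (Uset T D) ×ˢ (Finset.univ : Finset (Fin (ssz m k j))))
    (A := fun z => failSup j z.1 (D.1 z.2))
    (p := fun z c => Fails Pi j z.1 (D.1 z.2) c) j (2^j - 1)
    (by
      intro z hz z' hz' hne
      rcases Finset.mem_product.mp hz with ⟨hu, _⟩
      rcases Finset.mem_product.mp hz' with ⟨hu', _⟩
      rw [Finset.disjoint_left]
      intro e he he'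
      rcases Finset.mem_image.mp he with ⟨a, _, rfl⟩
      rcases Finset.mem_image.mp he' with ⟨a', _, hee⟩
      rcases edge_eq hee with ⟨h1, h2⟩ | ⟨h1, h2⟩
      · -- z'.1 = z.1 and values equal
        by_cases hii : z.2 = z'.2
        · exact hne (Prod.ext h1.symm hii)
        · exact Finset.disjoint_left.mp (hvd z'.2 z.2 (Ne.symm hii))
            (mem_vrange.mpr ⟨a', rfl⟩) (mem_vrange.mpr ⟨a, h2.symm⟩)
      · -- z'.1 ∈ range of z.2-th copy
        exact hUnr z'.1 hu' z.2 a h1.symm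
    )
    (by
      intro z _ c c' hagr
      exact fails_dep Pi j z.1 (D.1 z.2) c c' hagr)
    (by
      intro z hz
      rcases Finset.mem_product.mp hz with ⟨hu, _⟩
      exact count_one Pi j z.1 (D.1 z.2) (hvinj z.2) (fun a => hUnr z.1 hu z.2 a) hjE)
  rw [Finset.card_product, Finset.card_univ, Fintype.card_fin] at hmain
  have hmain' : (univ.filter (Phi Pi T D)).card
        * (2^j)^((Uset T D).card * ssz m k j)
      ≤ (2^j - 1)^((Uset T D).card * ssz m k j)
        * 2^(Fintype.card (Fin n × Fin n)) := by
    convert hmain using 3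
    exact filter_ext _ _ _ (fun c => Iff.rfl)
  clear hmain
  rename' hmain' => hmain
  -- abbreviations
  set E := Fintype.card (Fin n × Fin n) with hE
  set C := (univ.filter (Phi Pi T D)).card with hC
  set M := (Uset T D).card * ssz m k j with hM
  set B := (k/2) * (rr m k (m-1)/2) with hB
  have hBM : B ≤ M := by
    rw [hB, hM]
    apply index_lb hm hj1 hjm
    have hXcard : ((Finset.image D.2 Finset.univ) ∪
        Finset.univ.biUnion (fun i => vrange (D.1 i))).card
          ≤ wsz m k j + j * ssz m k j := by
      calc _ ≤ (Finset.image D.2 Finset.univ).card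
            + (Finset.univ.biUnion (fun i => vrange (D.1 i))).card := Finset.card_union_le _ _
        _ ≤ wsz m k j + j * ssz m k j := by
            apply Nat.add_le_add
            · calc _ ≤ (Finset.univ : Finset (Fin (wsz m k j))).card := Finset.card_image_le
                _ = wsz m k j := by rw [Finset.card_univ, Fintype.card_fin]
            · calc _ ≤ ∑ i : Fin (ssz m k j), (vrange (D.1 i)).card := Finset.card_biUnion_le
                _ ≤ ∑ _i : Fin (ssz m k j), j := by
                    apply Finset.sum_le_sum
                    intro i _
                    calc (vrange (D.1 i)).card
                        ≤ (Finset.univ : Finset (Fin j)).card := Finset.card_image_le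
                      _ = j := by rw [Finset.card_univ, Fintype.card_fin]
                _ = ssz m k j * j := by
                    rw [Finset.sum_const, smul_eq_mul, Finset.card_univ, Fintype.card_fin]
                _ = j * ssz m k j := Nat.mul_comm _ _
    have hsd := Finset.le_card_sdiff ((Finset.image D.2 Finset.univ) ∪
        Finset.univ.biUnion (fun i => vrange (D.1 i))) T
    have hUcard : (Uset T D).card = (T \ ((Finset.image D.2 Finset.univ) ∪
        Finset.univ.biUnion (fun i => vrange (D.1 i)))).card := rfl
    omega
  -- now the real-valued estimate
  have h1le : (1:ℕ) ≤ 2^j := Nat.one_le_two_pow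
  have hcast : (C : ℝ) * ((2:ℝ)^j)^M ≤ ((2:ℝ)^j - 1)^M * (2:ℝ)^E := by
    have h := (Nat.cast_le (α := ℝ)).mpr hmain
    push_cast at h
    rwa [Nat.cast_sub h1le, Nat.cast_pow, Nat.cast_ofNat, Nat.cast_one] at h
  have h2jpos : (0:ℝ) < ((2:ℝ)^j)^M := by positivity
  have hCle : (C : ℝ) ≤ (((2:ℝ)^j - 1) / (2:ℝ)^j)^M * (2:ℝ)^E := by
    rw [div_pow, div_mul_eq_mul_div, le_div_iff₀ h2jpos]
    exact hcast
  have hgam : (((2:ℝ)^j - 1) / (2:ℝ)^j) = 1 - (1/2:ℝ)^j := by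
    have : ((2:ℝ)^j) ≠ 0 := by positivity
    field_simp
    rw [mul_sub, mul_one, ← mul_pow]; norm_num
  have hhalf : (0:ℝ) ≤ (1/2:ℝ) := by norm_num
  have hhalf1 : (1/2:ℝ) ≤ 1 := by norm_num
  have hbase0 : (0:ℝ) ≤ 1 - (1/2:ℝ)^j := by
    have : (1/2:ℝ)^j ≤ 1 := pow_le_one₀ hhalf hhalf1
    linarith
  have hbasele : 1 - (1/2:ℝ)^j ≤ 1 - (1/2:ℝ)^m := by
    have : (1/2:ℝ)^m ≤ (1/2:ℝ)^j :=
      pow_le_pow_of_le_one hhalf hhalf1 (le_of_lt hjm)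
    linarith
  have hbig0 : (0:ℝ) ≤ 1 - (1/2:ℝ)^m := le_trans hbase0 hbasele
  have hbig1 : 1 - (1/2:ℝ)^m ≤ 1 := by
    have : (0:ℝ) ≤ (1/2:ℝ)^m := by positivity
    linarith
  calc (C:ℝ) ≤ (((2:ℝ)^j - 1) / (2:ℝ)^j)^M * (2:ℝ)^E := hCle
    _ = (1 - (1/2:ℝ)^j)^M * (2:ℝ)^E := by rw [hgam]
    _ ≤ (1 - (1/2:ℝ)^m)^M * (2:ℝ)^E := by
        apply mul_le_mul_of_nonneg_right _ (by positivity)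
        exact pow_le_pow_left₀ hbase0 hbasele M
    _ ≤ (1 - (1/2:ℝ)^m)^B * (2:ℝ)^E := by
        apply mul_le_mul_of_nonneg_right _ (by positivity)
        exact pow_le_pow_of_le_one hbig0 hbig1 hBM


theorem main_comb (m : ℕ) (hm : 1 ≤ m) (Pi : ℕ → ℕ → Bool) (hPi : ∀ a b, Pi a b = Pi b a)
    (n k : ℕ) (hkn : k ≤ n) (hk0 : (4*m)^m ≤ k)
    (hsmall : (m : ℝ) * (n:ℝ)^(2*k)
        * (1 - (1/2:ℝ)^m) ^ ((k/2) * (rr m k (m-1) / 2)) < 1) :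
    ∃ c : Fin n × Fin n → Bool, ∀ T : Finset (Fin n), T.card = k →
      ∃ v : Fin m → Fin n, IsCopy Pi c T v := by
  classical
  have hk1 : 1 ≤ k := le_trans (Nat.one_le_two_pow.trans
    (Nat.pow_le_pow_left (by omega) m)) hk0
  have hn : 0 < n := lt_of_lt_of_le (by omega) hkn
  have hEnn : Fintype.card (Fin n × Fin n) = n * n := by
    rw [Fintype.card_prod, Fintype.card_fin]
  have hjE : ∀ j, j < m → j ≤ Fintype.card (Fin n × Fin n) := by
    intro j hj
    have hm4 : m ≤ (4*m)^m := le_trans (by omega) (Nat.le_self_pow (by omega) (4*m))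
    have : j ≤ n := by omega
    rw [hEnn]
    nlinarith
  set E := Fintype.card (Fin n × Fin n) with hE
  set γ : ℝ := 1 - (1/2:ℝ)^m with hγ
  set B := (k/2) * (rr m k (m-1) / 2) with hB
  have hγ0 : (0:ℝ) ≤ γ := by
    have : (1/2:ℝ)^m ≤ 1 := pow_le_one₀ (by norm_num) (by norm_num)
    rw [hγ]; linarith
  set Bad := (univ : Finset (Fin n × Fin n → Bool)).filter
    (fun c => ∃ T ∈ Finset.powersetCard k (univ : Finset (Fin n)),
      ¬ ∃ v : Fin m → Fin n, IsCopy Pi c T v) with hBad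
  -- the subset chain
  have hsub : Bad ⊆ (Finset.powersetCard k (univ : Finset (Fin n))).biUnion
      (fun T => (Finset.Ico 1 m).biUnion (fun j =>
        ((univ : Finset ((Fin (ssz m k j) → Fin j → Fin n) × (Fin (wsz m k j) → Fin n))).filter
            dataOK).biUnion
          (fun D => univ.filter (Phi Pi T D)))) := by
    intro c hc
    rcases Finset.mem_filter.mp hc with ⟨_, T, hT, hbadc⟩
    have hTcard : T.card = k := (Finset.mem_powersetCard.mp hT).2
    obtain ⟨j, hj1, hjm, hfam, hnfam⟩ := chain Pi c T hm (rr m k)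
      (by rw [hTcard]; exact Nat.div_le_self _ _)
      (Nat.one_le_div_iff (by positivity) |>.mpr hk0)
      hbadc
    obtain ⟨v, g, hvinj, hvd, hfail⟩ := extract Pi hPi c T hn _ _ hfam hnfam
    apply Finset.mem_biUnion.mpr
    refine ⟨T, hT, ?_⟩
    apply Finset.mem_biUnion.mpr
    refine ⟨j, Finset.mem_Ico.mpr ⟨hj1, hjm⟩, ?_⟩
    apply Finset.mem_biUnion.mpr
    refine ⟨(v, g), Finset.mem_filter.mpr ⟨Finset.mem_univ _, hvinj, hvd⟩, ?_⟩
    apply Finset.mem_filter.mpr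
    refine ⟨Finset.mem_univ _, ?_⟩
    intro z hz
    rcases Finset.mem_product.mp hz with ⟨hz1, _⟩
    exact hfail z.1 hz1 z.2
  -- cardinality estimate, in ℝ
  have hcount : (Bad.card : ℝ) ≤ (n:ℝ)^k * ((m:ℝ) * ((n:ℝ)^k * (γ^B * 2^E))) := by
    have h1 : (Bad.card : ℝ) ≤ ∑ T ∈ Finset.powersetCard k (univ : Finset (Fin n)),
        ((( (Finset.Ico 1 m).biUnion (fun j =>
          ((univ : Finset ((Fin (ssz m k j) → Fin j → Fin n) × (Fin (wsz m k j) → Fin n))).filter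
              dataOK).biUnion
            (fun D => univ.filter (Phi Pi T D)))).card : ℝ)) := by
      have := le_trans (Finset.card_le_card hsub) (Finset.card_biUnion_le)
      calc (Bad.card : ℝ) ≤ _ := Nat.cast_le.mpr this
        _ = _ := by push_cast; rfl
    refine le_trans h1 ?_
    have hTcount : (Finset.powersetCard k (univ : Finset (Fin n))).card ≤ n^k := by
      rw [Finset.card_powersetCard, Finset.card_univ, Fintype.card_fin]
      exact Nat.choose_le_pow _ _
    have hinner : ∀ T ∈ Finset.powersetCard k (univ : Finset (Fin n)),
        ((( (Finset.Ico 1 m).biUnion (fun j =>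
          ((univ : Finset ((Fin (ssz m k j) → Fin j → Fin n) × (Fin (wsz m k j) → Fin n))).filter
              dataOK).biUnion
            (fun D => univ.filter (Phi Pi T D)))).card : ℝ))
          ≤ (m:ℝ) * ((n:ℝ)^k * (γ^B * 2^E)) := by
      intro T hT
      have hTcard : T.card = k := (Finset.mem_powersetCard.mp hT).2
      have h2 : (((Finset.Ico 1 m).biUnion (fun j =>
          ((univ : Finset ((Fin (ssz m k j) → Fin j → Fin n) × (Fin (wsz m k j) → Fin n))).filter
              dataOK).biUnion
            (fun D => univ.filter (Phi Pi T D)))).card : ℝ)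
          ≤ ∑ j ∈ Finset.Ico 1 m, (((((univ : Finset ((Fin (ssz m k j) → Fin j → Fin n) ×
              (Fin (wsz m k j) → Fin n))).filter dataOK).biUnion
            (fun D => univ.filter (Phi Pi T D))).card : ℝ)) := by
        calc _ ≤ ((∑ j ∈ Finset.Ico 1 m, ((((univ : Finset ((Fin (ssz m k j) → Fin j → Fin n) ×
              (Fin (wsz m k j) → Fin n))).filter dataOK).biUnion
            (fun D => univ.filter (Phi Pi T D))).card) : ℕ) : ℝ) :=
              Nat.cast_le.mpr Finset.card_biUnion_le
          _ = _ := by push_cast; rfl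
      refine le_trans h2 ?_
      have h3 : ∀ j ∈ Finset.Ico 1 m,
          (((((univ : Finset ((Fin (ssz m k j) → Fin j → Fin n) ×
              (Fin (wsz m k j) → Fin n))).filter dataOK).biUnion
            (fun D => univ.filter (Phi Pi T D))).card : ℝ))
            ≤ (n:ℝ)^k * (γ^B * 2^E) := by
        intro j hj
        rcases Finset.mem_Ico.mp hj with ⟨hj1, hjm⟩
        have h4 : ((((univ : Finset ((Fin (ssz m k j) → Fin j → Fin n) ×
            (Fin (wsz m k j) → Fin n))).filter dataOK).biUnion
              (fun D => univ.filter (Phi Pi T D))).card : ℝ)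
            ≤ ∑ D ∈ ((univ : Finset ((Fin (ssz m k j) → Fin j → Fin n) ×
              (Fin (wsz m k j) → Fin n))).filter dataOK),
                ((univ.filter (Phi Pi T D)).card : ℝ) := by
          calc _ ≤ ((∑ D ∈ ((univ : Finset ((Fin (ssz m k j) → Fin j → Fin n) ×
              (Fin (wsz m k j) → Fin n))).filter dataOK),
                (univ.filter (Phi Pi T D)).card : ℕ) : ℝ) := Nat.cast_le.mpr Finset.card_biUnion_le
            _ = _ := by push_cast; rfl
        refine le_trans h4 ?_
        have h5 : ∀ D ∈ ((univ : Finset ((Fin (ssz m k j) → Fin j → Fin n) ×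
              (Fin (wsz m k j) → Fin n))).filter dataOK),
            ((univ.filter (Phi Pi T D)).card : ℝ) ≤ γ^B * 2^E := by
          intro D hD
          exact count_phi Pi hm hj1 hjm (hjE j hjm) T hTcard D (Finset.mem_filter.mp hD).2
        calc _ ≤ ∑ _D ∈ ((univ : Finset ((Fin (ssz m k j) → Fin j → Fin n) ×
              (Fin (wsz m k j) → Fin n))).filter dataOK), (γ^B * 2^E) := Finset.sum_le_sum h5
          _ = (((univ : Finset ((Fin (ssz m k j) → Fin j → Fin n) ×
              (Fin (wsz m k j) → Fin n))).filter dataOK).card : ℝ) * (γ^B * 2^E) := by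
              rw [Finset.sum_const, nsmul_eq_mul]
          _ ≤ (n:ℝ)^k * (γ^B * 2^E) := by
              apply mul_le_mul_of_nonneg_right _
                (mul_nonneg (pow_nonneg hγ0 B) (by positivity))
              have hDcount : ((univ : Finset ((Fin (ssz m k j) → Fin j → Fin n) ×
                  (Fin (wsz m k j) → Fin n))).filter dataOK).card ≤ n ^ k := by
                calc _ ≤ (univ : Finset ((Fin (ssz m k j) → Fin j → Fin n) ×
                    (Fin (wsz m k j) → Fin n))).card := Finset.card_filter_le _ _
                  _ = n ^ (j * ssz m k j) * n ^ (wsz m k j) := by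
                      rw [Finset.card_univ, Fintype.card_prod, Fintype.card_fun,
                        Fintype.card_fun, Fintype.card_fun, Fintype.card_fin, Fintype.card_fin,
                        Fintype.card_fin, Fintype.card_fin, ← pow_mul, mul_comm j _]
                  _ = n ^ (j * ssz m k j + wsz m k j) := by rw [pow_add]
                  _ ≤ n ^ k := Nat.pow_le_pow_right hn (wsum_le hm hj1 hjm)
              calc ((((univ : Finset ((Fin (ssz m k j) → Fin j → Fin n) ×
                  (Fin (wsz m k j) → Fin n))).filter dataOK).card : ℝ))
                  ≤ ((n^k : ℕ) : ℝ) := Nat.cast_le.mpr hDcount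
                _ = (n:ℝ)^k := by push_cast; rfl
      calc _ ≤ ∑ _j ∈ Finset.Ico 1 m, ((n:ℝ)^k * (γ^B * 2^E)) := Finset.sum_le_sum h3
        _ = ((Finset.Ico 1 m).card : ℝ) * ((n:ℝ)^k * (γ^B * 2^E)) := by
            rw [Finset.sum_const, nsmul_eq_mul]
        _ ≤ (m:ℝ) * ((n:ℝ)^k * (γ^B * 2^E)) := by
            apply mul_le_mul_of_nonneg_right _
              (mul_nonneg (by positivity) (mul_nonneg (pow_nonneg hγ0 B) (by positivity)))
            rw [Nat.card_Ico]
            exact_mod_cast Nat.cast_le.mpr (Nat.sub_le m 1)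
    calc _ ≤ ∑ _T ∈ Finset.powersetCard k (univ : Finset (Fin n)),
          ((m:ℝ) * ((n:ℝ)^k * (γ^B * 2^E))) := Finset.sum_le_sum hinner
      _ = ((Finset.powersetCard k (univ : Finset (Fin n))).card : ℝ)
          * ((m:ℝ) * ((n:ℝ)^k * (γ^B * 2^E))) := by rw [Finset.sum_const, nsmul_eq_mul]
      _ ≤ (n:ℝ)^k * ((m:ℝ) * ((n:ℝ)^k * (γ^B * 2^E))) := by
          apply mul_le_mul_of_nonneg_right _
            (mul_nonneg (by positivity)
              (mul_nonneg (by positivity) (mul_nonneg (pow_nonneg hγ0 B) (by positivity))))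
          calc ((Finset.powersetCard k (univ : Finset (Fin n))).card : ℝ)
              ≤ ((n^k : ℕ) : ℝ) := Nat.cast_le.mpr hTcount
            _ = (n:ℝ)^k := by push_cast; rfl
  -- conclude Bad is a proper subset
  have hlt : Bad.card < 2 ^ E := by
    have h2E : ((2:ℝ))^E > 0 := by positivity
    have : (Bad.card : ℝ) < (2:ℝ)^E := by
      calc (Bad.card : ℝ) ≤ (n:ℝ)^k * ((m:ℝ) * ((n:ℝ)^k * (γ^B * 2^E))) := hcount
        _ = ((m:ℝ) * (n:ℝ)^(2*k) * γ^B) * 2^E := by rw [two_mul, pow_add]; ring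
        _ < 1 * 2^E := by
            apply mul_lt_mul_of_pos_right _ h2E
            exact hsmall
        _ = 2^E := one_mul _
    have := this.trans_le (le_of_eq (by push_cast; rfl :
      ((2:ℝ))^E = (((2^E : ℕ)) : ℝ)))
    exact_mod_cast this
  have hgood : ∃ c, c ∉ Bad := by
    by_contra h
    push_neg at h
    have : Bad = univ := Finset.eq_univ_iff_forall.mpr h
    rw [this, Finset.card_univ, Fintype.card_fun, Fintype.card_bool] at hlt
    rw [hE] at hlt
    omega
  obtain ⟨c, hc⟩ := hgood
  refine ⟨c, ?_⟩
  intro T hT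
  by_contra hno
  exact hc (Finset.mem_filter.mpr ⟨Finset.mem_univ _,
    T, Finset.mem_powersetCard.mpr ⟨Finset.subset_univ _, hT⟩, hno⟩)


/-- restriction of a metric to a subset is a metric -/
lemma metric_restrict {α : Type*} {d : α → α → ℝ} (h : IsMetricDist d) (s : Set α) :
    IsMetricDist (fun x y : s => d x.1 y.1) := by
  refine ⟨?_, fun x y => h.2.1 _ _, fun x y z => h.2.2 _ _ _⟩
  intro x y
  rw [h.1]
  exact ⟨Subtype.ext, fun h' => congrArg Subtype.val h'⟩

/-- the metric coming from a coloring -/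
noncomputable def cmet {n : ℕ} (c : Fin n × Fin n → Bool) (x y : Fin n) : ℝ :=
  if x = y then 0 else if symc c x y then 1 else 2

lemma cmet_metric {n : ℕ} (c : Fin n × Fin n → Bool) : IsMetricDist (cmet c) := by
  have hval : ∀ x y : Fin n, x ≠ y → cmet c x y = 1 ∨ cmet c x y = 2 := by
    intro x y hxy
    rw [cmet, if_neg hxy]
    by_cases h : symc c x y <;> simp [h]
  have hnonneg : ∀ x y : Fin n, 0 ≤ cmet c x y := by
    intro x y
    by_cases h : x = y
    · simp [cmet, h]
    · rcases hval x y h with h' | h' <;> rw [h'] <;> norm_num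
  refine ⟨?_, ?_, ?_⟩
  · intro x y
    constructor
    · intro h
      by_contra hxy
      rcases hval x y hxy with h' | h' <;> rw [h'] at h <;> norm_num at h
    · intro h; simp [cmet, h]
  · intro x y
    by_cases h : x = y
    · simp [cmet, h]
    · rw [cmet, cmet, if_neg h, if_neg (Ne.symm h), symc_comm]
  · intro x y z
    by_cases hxz : x = z
    · rw [cmet, if_pos hxz]
      exact add_nonneg (hnonneg x y) (hnonneg y z)
    by_cases hxy : x = y
    · subst hxy
      rw [show cmet c x x = 0 by simp [cmet]]
      linarith [le_refl (cmet c x z)]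
    by_cases hyz : y = z
    · subst hyz
      rw [show cmet c y y = 0 by simp [cmet]]
      linarith [le_refl (cmet c x y)]
    · have h1 : cmet c x z ≤ 2 := by rcases hval x z hxz with h | h <;> rw [h] <;> norm_num
      have h2 : 1 ≤ cmet c x y := by rcases hval x y hxy with h | h <;> rw [h] <;> norm_num
      have h3 : 1 ≤ cmet c y z := by rcases hval y z hyz with h | h <;> rw [h] <;> norm_num
      linarith

lemma nat_div_lb (a b : ℕ) (hb : 0 < b) : (a:ℝ)/b - 1 ≤ ((a/b : ℕ):ℝ) := by
  have h := Nat.div_add_mod a b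
  have h2 : a % b < b := Nat.mod_lt _ hb
  have hbR : (0:ℝ) < b := by exact_mod_cast hb
  have : (a:ℝ) < b * ((a/b : ℕ):ℝ) + b := by
    have := congrArg (fun t : ℕ => (t:ℝ)) h
    push_cast at this
    push_cast
    nlinarith [ (show ((a % b : ℕ):ℝ) < (b:ℝ) by exact_mod_cast h2) ]
  have h3 : (a:ℝ)/b < ((a/b:ℕ):ℝ) + 1 := by
    rw [div_lt_iff₀ hbR]
    nlinarith
  linarith

lemma hsmall_of (m : ℕ) (hm : 1 ≤ m) (n k R q : ℕ) (hR : 1 ≤ R) (γ : ℝ)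
    (hγ0 : 0 < γ) (hγ1 : γ < 1)
    (hn3 : 3 ≤ n) (hk4 : 4 ≤ k) (hkm : m ≤ k) (hk8R : 8*R ≤ k)
    (hkC : (96 * (R:ℝ) / (-Real.log γ)) * Real.log n ≤ k) :
    (m : ℝ) * (n:ℝ)^(2*k) * γ ^ ((k/2) * (q/2)) < 1 ∨ ¬ (q = k / R) := by
  by_cases hq : q = k / R
  swap
  · exact Or.inr hq
  left
  set L : ℝ := -Real.log γ with hL
  have hLpos : 0 < L := by
    rw [hL]
    have := Real.log_neg hγ0 hγ1
    linarith
  have hRpos : (0:ℝ) < R := by exact_mod_cast hR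
  have hkR : (0:ℝ) < k := by positivity
  have hnR : (0:ℝ) < n := by positivity
  have hlogn : 1 ≤ Real.log n := by
    rw [Real.le_log_iff_exp_le hnR]
    calc Real.exp 1 ≤ 2.7182818286 := le_of_lt Real.exp_one_lt_d9
      _ ≤ (3:ℝ) := by norm_num
      _ ≤ n := by exact_mod_cast hn3
  -- lower bound for B
  have hx : (k:ℝ)/(2*R) ≤ ((q:ℕ):ℝ) := by
    have h1 := nat_div_lb k R (by omega)
    rw [hq]
    have : (k:ℝ)/(2*R) + 1 ≤ (k:ℝ)/R := by
      rw [div_add' _ _ _ (ne_of_gt (by positivity)), div_le_div_iff₀ (by positivity) hRpos]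
      have : (8:ℝ)*R ≤ k := by exact_mod_cast hk8R
      ring_nf
      nlinarith
    linarith
  have hy : (k:ℝ)/(8*R) ≤ ((q/2 : ℕ):ℝ) := by
    have h1 := nat_div_lb q 2 (by omega)
    have : (k:ℝ)/(8*R) + 1 ≤ (k:ℝ)/(4*R) := by
      rw [div_add' _ _ _ (ne_of_gt (by positivity)), div_le_div_iff₀ (by positivity) (by positivity)]
      have : (8:ℝ)*R ≤ k := by exact_mod_cast hk8R
      nlinarith
    have h2 : (k:ℝ)/(4*R) - 1 ≤ (q:ℝ)/2 - 1 := by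
      have : (k:ℝ)/(4*R) ≤ (q:ℝ)/2 := by
        rw [div_le_div_iff₀ (by positivity) (by norm_num)]
        rw [div_le_iff₀ (by positivity)] at hx
        nlinarith
      linarith
    linarith
  have hz : (k:ℝ)/4 ≤ ((k/2 : ℕ):ℝ) := by
    have h1 := nat_div_lb k 2 (by omega)
    have hk4R : (4:ℝ) ≤ k := by exact_mod_cast hk4
    have : (k:ℝ)/4 + 1 ≤ (k:ℝ)/2 := by
      rw [div_add' _ _ _ (by norm_num), div_le_div_iff₀ (by norm_num) (by norm_num)]
      nlinarith
    linarith
  have hB : (k:ℝ)*k/(32*R) ≤ (((k/2) * (q/2) : ℕ):ℝ) := by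
    push_cast
    calc (k:ℝ)*k/(32*R) = ((k:ℝ)/4) * ((k:ℝ)/(8*R)) := by ring
      _ ≤ ((k/2:ℕ):ℝ) * ((q/2:ℕ):ℝ) := by
          apply mul_le_mul hz hy (by positivity) (by positivity)
  -- final log computation
  set B : ℕ := (k/2) * (q/2) with hBdef
  have hγB : γ ^ B = Real.exp (B * Real.log γ) := by
    rw [← Real.log_pow, Real.exp_log (pow_pos hγ0 B)]
  have hmn : (m:ℝ) * (n:ℝ)^(2*k) = Real.exp (Real.log m + ((2*k : ℕ) : ℝ) * Real.log n) := by
    rw [Real.exp_add]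
    congr 1
    · rw [Real.exp_log (by exact_mod_cast (by omega : 0 < m))]
    · rw [← Real.log_pow, Real.exp_log (by positivity)]
  rw [hγB, hmn, ← Real.exp_add]
  rw [show Real.log ↑m + ↑(2 * k) * Real.log ↑n + ↑B * Real.log γ
      = Real.log ↑m + ↑(2 * k) * Real.log ↑n - ↑B * L by rw [hL]; ring]
  apply Real.exp_lt_one_iff.mpr
  rw [sub_neg]
  -- B * L ≥ (k²/32R) L ≥ 3 k log n > log m + 2k log n
  have hstep1 : (k:ℝ) * (3 * Real.log n) ≤ (B:ℝ) * L := by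
    calc (k:ℝ) * (3 * Real.log n) ≤ (k:ℝ) * ((k:ℝ) * L / (32*R)) := by
          apply mul_le_mul_of_nonneg_left _ (le_of_lt hkR)
          rw [le_div_iff₀ (by positivity : (0:ℝ) < 32*R)]
          have h1 : (96 * (R:ℝ) / L * Real.log n) * L ≤ (k:ℝ) * L :=
            mul_le_mul_of_nonneg_right hkC (le_of_lt hLpos)
          have h2 : (96 * (R:ℝ) / L * Real.log n) * L = 96 * R * Real.log n := by
            field_simp
          nlinarith
      _ = ((k:ℝ)*k/(32*R)) * L := by ring
      _ ≤ (B:ℝ) * L := mul_le_mul_of_nonneg_right hB (le_of_lt hLpos)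
  have hlogm : Real.log m < k * Real.log n := by
    calc Real.log m ≤ (m:ℝ) - 1 :=
          Real.log_le_sub_one_of_pos (by exact_mod_cast (by omega : 0 < m))
      _ < (k:ℝ) := by
          have : (m:ℝ) ≤ k := by exact_mod_cast hkm
          linarith
      _ ≤ (k:ℝ) * Real.log n := by nlinarith
  calc Real.log ↑m + ↑(2 * k) * Real.log ↑n
      < (k:ℝ) * Real.log n + (2*k) * Real.log n := by push_cast; linarith
    _ = (k:ℝ) * (3 * Real.log n) := by ring
    _ ≤ (B:ℝ) * L := hstep1


end Stmt7

open Stmt7 in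
theorem stmt7 (P : (α : Type) → (α → α → ℝ) → Prop)
    (hIso : ∀ (α β : Type) (dα : α → α → ℝ) (dβ : β → β → ℝ),
      IsMetricDist dα → IsMetricDist dβ → P α dα →
      (∃ f : α → β, Function.Bijective f ∧ ∀ x y, dβ (f x) (f y) = dα x y) →
      P β dβ)
    (hHer : ∀ (α : Type) (dα : α → α → ℝ), IsMetricDist dα → P α dα →
      ∀ s : Set α, P s (fun x y => dα x.1 y.1))
    (M₀ : Type) [Fintype M₀] (d₀ : M₀ → M₀ → ℝ) (hd₀ : IsMetricDist d₀)
    (h12 : ∀ x y : M₀, x ≠ y → d₀ x y = 1 ∨ d₀ x y = 2)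
    (hM₀ : ¬ P M₀ d₀) :
    ∃ C : ℝ, 0 < C ∧ ∀ N : ℕ, ∃ n : ℕ, N ≤ n ∧
      ∃ d : Fin n → Fin n → ℝ, IsMetricDist d ∧
        ∀ S : Set (Fin n), C * Real.log n ≤ S.ncard →
          ¬ P S (fun x y => d x.1 y.1) := by
  classical
  set m := Fintype.card M₀ with hmdef
  by_cases hm0 : m = 0
  · -- M₀ is empty : everything fails P
    have hempty : IsEmpty M₀ := Fintype.card_eq_zero_iff.mp hm0
    refine ⟨1, one_pos, ?_⟩
    intro N
    have hdisc : IsMetricDist (fun x y : Fin N => if x = y then 0 else (1:ℝ)) := by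
      refine ⟨?_, ?_, ?_⟩
      · intro x y
        show (if x = y then (0:ℝ) else 1) = 0 ↔ x = y
        by_cases h : x = y <;> simp [h]
      · intro x y
        show (if x = y then (0:ℝ) else 1) = (if y = x then (0:ℝ) else 1)
        by_cases h : x = y
        · simp [h]
        · rw [if_neg h, if_neg (Ne.symm h)]
      · intro x y z
        show (if x = z then (0:ℝ) else 1) ≤
          (if x = y then (0:ℝ) else 1) + (if y = z then (0:ℝ) else 1)
        by_cases hxz : x = z
        · rw [if_pos hxz]
          have h1 : (0:ℝ) ≤ if x = y then 0 else 1 := by split <;> norm_num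
          have h2 : (0:ℝ) ≤ if y = z then 0 else 1 := by split <;> norm_num
          linarith
        · rw [if_neg hxz]
          by_cases hxy : x = y
          · subst hxy
            rw [if_pos rfl, if_neg hxz]
            norm_num
          · rw [if_neg hxy]
            have h2 : (0:ℝ) ≤ if y = z then 0 else 1 := by split <;> norm_num
            linarith
    refine ⟨N, le_refl _, _, hdisc, ?_⟩
    intro S _ hP
    have h2 := hHer _ _ (metric_restrict hdisc S) hP (∅ : Set ↥S)
    apply hM₀
    apply hIso _ _ _ d₀ (metric_restrict (metric_restrict hdisc S) ∅) hd₀ h2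
    refine ⟨fun x => absurd x.2 (Set.notMem_empty _), ⟨?_, ?_⟩, ?_⟩
    · intro a
      exact absurd a.2 (Set.notMem_empty _)
    · intro b
      exact hempty.elim b
    · intro x
      exact absurd x.2 (Set.notMem_empty _)
  · -- main case
    have hm : 1 ≤ m := by omega
    set e : Fin m ≃ M₀ := (Fintype.equivFin M₀).symm with he
    set Pi : ℕ → ℕ → Bool := fun a b =>
      if h : a < m ∧ b < m then decide (d₀ (e ⟨a, h.1⟩) (e ⟨b, h.2⟩) = 1) else false with hPidef
    have hPisymm : ∀ a b, Pi a b = Pi b a := by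
      intro a b
      rw [hPidef]
      beta_reduce
      by_cases h : a < m ∧ b < m
      · rw [dif_pos h, dif_pos (And.intro h.2 h.1)]
        congr 1
        rw [hd₀.2.1]
      · rw [dif_neg h, dif_neg (fun h' => h ⟨h'.2, h'.1⟩)]
    set γ : ℝ := 1 - (1/2:ℝ)^m with hγ
    have hγ0 : 0 < γ := by
      have : (1/2:ℝ)^m < 1 := pow_lt_one₀ (by norm_num) (by norm_num) (by omega)
      rw [hγ]; linarith
    have hγ1 : γ < 1 := by
      have : (0:ℝ) < (1/2:ℝ)^m := by positivity
      rw [hγ]; linarith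
    set L : ℝ := -Real.log γ with hL
    have hLpos : 0 < L := by
      have := Real.log_neg hγ0 hγ1
      rw [hL]; linarith
    set R : ℕ := (4*m)^(m-1) with hR
    have hR1 : 1 ≤ R := by
      rw [hR]
      exact Nat.one_le_pow _ _ (by omega)
    set C : ℝ := max (96 * (R:ℝ) / L) 1 with hC
    have hCpos : 0 < C := lt_of_lt_of_le one_pos (le_max_right _ _)
    refine ⟨C, hCpos, ?_⟩
    intro N
    set K₀ : ℕ := 16 * (4*m)^m + 8*R + m + 4 with hK₀
    have hoo := Real.isLittleO_log_id_atTop.bound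
      (show (0:ℝ) < 1/(2*C) by positivity)
    rw [Filter.eventually_atTop] at hoo
    obtain ⟨a₀, ha₀⟩ := hoo
    set n : ℕ := max N (max (⌈a₀⌉₊ + 4) (⌈Real.exp K₀⌉₊ + 4)) with hn
    have hnN : N ≤ n := le_max_left _ _
    have hn4 : 4 ≤ n := by
      have h1 : max (⌈a₀⌉₊ + 4) (⌈Real.exp K₀⌉₊ + 4) ≤ n := le_max_right _ _
      have h2 : ⌈a₀⌉₊ + 4 ≤ max (⌈a₀⌉₊ + 4) (⌈Real.exp K₀⌉₊ + 4) := le_max_left _ _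
      omega
    have hnpos : (0:ℝ) < n := by
      have : (0:ℕ) < n := by omega
      exact_mod_cast this
    have hnexp : Real.exp K₀ ≤ n := by
      have h1 : (⌈Real.exp K₀⌉₊ : ℝ) ≤ n := by
        have h2 : ⌈Real.exp K₀⌉₊ + 4 ≤ max (⌈a₀⌉₊ + 4) (⌈Real.exp K₀⌉₊ + 4) := le_max_right _ _
        have h3 : max (⌈a₀⌉₊ + 4) (⌈Real.exp K₀⌉₊ + 4) ≤ n := le_max_right _ _
        exact_mod_cast (by omega : ⌈Real.exp K₀⌉₊ ≤ n)
      exact (Nat.le_ceil _).trans h1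
    have hna : a₀ ≤ (n:ℝ) := by
      have h2 : ⌈a₀⌉₊ + 4 ≤ n := by
        have h3 := le_max_left (⌈a₀⌉₊ + 4) (⌈Real.exp (K₀:ℝ)⌉₊ + 4)
        have h4 := le_max_right N ((⌈a₀⌉₊ + 4) ⊔ (⌈Real.exp (K₀:ℝ)⌉₊ + 4))
        omega
      rcases le_total a₀ 0 with h | h
      · exact h.trans (le_of_lt hnpos)
      · calc a₀ ≤ (⌈a₀⌉₊:ℝ) := Nat.le_ceil a₀
          _ ≤ (n:ℝ) := by exact_mod_cast (by omega : ⌈a₀⌉₊ ≤ n)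
    have hlogK : (K₀:ℝ) ≤ Real.log n := by
      rw [Real.le_log_iff_exp_le hnpos]
      exact hnexp
    have hlogn0 : 0 ≤ Real.log n := le_trans (by positivity) hlogK
    set k : ℕ := ⌈C * Real.log n⌉₊ with hk
    have hCk : C * Real.log n ≤ k := Nat.le_ceil _
    have hkK₀ : K₀ ≤ k := by
      have h1 : (K₀:ℝ) ≤ (k:ℝ) := by
        calc (K₀:ℝ) ≤ Real.log n := hlogK
          _ = 1 * Real.log n := (one_mul _).symm
          _ ≤ C * Real.log n := mul_le_mul_of_nonneg_right (le_max_right _ _) hlogn0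
          _ ≤ k := hCk
      exact_mod_cast h1
    have hkn : k ≤ n := by
      have hb := ha₀ n hna
      simp only [id_eq, Real.norm_eq_abs] at hb
      rw [abs_of_nonneg hlogn0, abs_of_nonneg (le_of_lt hnpos)] at hb
      have hClog : C * Real.log n ≤ (n:ℝ)/2 := by
        have := mul_le_mul_of_nonneg_left hb (le_of_lt hCpos)
        calc C * Real.log n ≤ C * (1/(2*C) * n) := this
          _ = (n:ℝ)/2 := by field_simp
      have hceil : (k:ℝ) < C * Real.log n + 1 := Nat.ceil_lt_add_one (by positivity)
      have hkr : (k:ℝ) < (n:ℝ) := by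
        have hnge4 : (4:ℝ) ≤ n := by exact_mod_cast hn4
        calc (k:ℝ) < C * Real.log n + 1 := hceil
          _ ≤ (n:ℝ)/2 + 1 := by linarith
          _ ≤ (n:ℝ) := by linarith
      exact le_of_lt (by exact_mod_cast hkr)
    have hk0 : (4*m)^m ≤ k := by
      have h1 : (4*m)^m ≤ K₀ := by rw [hK₀]; omega
      omega
    have hsmall : (m : ℝ) * (n:ℝ)^(2*k) * γ ^ ((k/2) * (rr m k (m-1) / 2)) < 1 := by
      have hq : rr m k (m-1) = k / R := by rw [hR, rr]
      have hCk' : (96 * (R:ℝ) / L) * Real.log n ≤ k := by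
        calc (96 * (R:ℝ) / L) * Real.log n ≤ C * Real.log n :=
              mul_le_mul_of_nonneg_right (le_max_left _ _) hlogn0
          _ ≤ k := hCk
      rcases hsmall_of m hm n k R (rr m k (m-1)) hR1 γ hγ0 hγ1
        (by omega) (by omega) (by omega) (by omega) (by rw [← hL]; exact hCk') with h | h
      · exact h
      · exact absurd hq h
    obtain ⟨c, hcgood⟩ := main_comb m hm Pi hPisymm n k hkn hk0 (by rw [hγ] at hsmall; exact hsmall)
    refine ⟨n, hnN, cmet c, cmet_metric c, ?_⟩
    intro S hS hP
    have hkS : k ≤ S.ncard := by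
      rw [hk]
      exact Nat.ceil_le.mpr hS
    have hST : S.ncard = S.toFinset.card := S.ncard_eq_toFinset_card'
    obtain ⟨T, hTsub, hTcard⟩ := Finset.exists_subset_card_eq
      (show k ≤ S.toFinset.card by omega)
    obtain ⟨v, hvinj, hvT, hvpat⟩ := hcgood T hTcard
    have hvS : ∀ a, v a ∈ S := fun a => Set.mem_toFinset.mp (hTsub (hvT a))
    set s' : Set ↥S := {x | (x : Fin n) ∈ Set.range v} with hs'
    have hres1 : IsMetricDist (fun x y : ↥S => cmet c x.1 y.1) :=
      metric_restrict (cmet_metric c) S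
    have hP2 := hHer ↥S _ hres1 hP s'
    apply hM₀
    set E2 : ↥s' ≃ Fin m :=
      { toFun := fun x => (Equiv.ofInjective v hvinj).symm ⟨x.1.1, x.2⟩
        invFun := fun i => ⟨⟨v i, hvS i⟩, ⟨i, rfl⟩⟩
        left_inv := by
          intro x
          apply Subtype.ext
          apply Subtype.ext
          exact Equiv.apply_ofInjective_symm hvinj _
        right_inv := by
          intro i
          rw [Equiv.symm_apply_eq]
          rfl } with hE2
    apply hIso ↥s' M₀ _ d₀ (metric_restrict hres1 s') hd₀ hP2
    refine ⟨fun x => e (E2 x), (E2.trans e).bijective, ?_⟩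
    intro x y
    have hx : v (E2 x) = x.1.1 := Equiv.apply_ofInjective_symm hvinj _
    have hy : v (E2 y) = y.1.1 := Equiv.apply_ofInjective_symm hvinj _
    show d₀ (e (E2 x)) (e (E2 y)) = cmet c x.1.1 y.1.1
    rw [← hx, ← hy]
    by_cases hab : E2 x = E2 y
    · rw [hab, cmet, if_pos rfl, (hd₀.1 _ _).mpr rfl]
    · have hvne : v (E2 x) ≠ v (E2 y) := fun h => hab (hvinj h)
      rw [cmet, if_neg hvne]
      have hpat := hvpat (E2 x) (E2 y) hab
      rw [hpat, hPidef]
      beta_reduce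
      rw [dif_pos (And.intro (E2 x).isLt (E2 y).isLt)]
      rw [Fin.eta, Fin.eta]
      by_cases h1 : d₀ (e (E2 x)) (e (E2 y)) = 1
      · simp [h1]
      · have h2 := h12 (e (E2 x)) (e (E2 y)) (fun hh => hab (e.injective hh))
        rcases h2 with h | h
        · exact absurd h h1
        · simp [h1, h]
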